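/- For the 4×4 matrix A(z) = [[z,1,1,0],[0,z,0,1],[0,0,−z,1],[0,0,0,z]], one has A(z)⁻¹ = (1/z²)·[[z,−1,1,0],[0,z,0,−1],[0,0,−z,1],[0,0,0,z]] for z ≠ 0, so z = 0 is a pole of order exactly 2 of A(z)⁻¹, even though the length of the longest chain of classes of A(0) (all four singleton classes being basic) is 3. -/

import Mathlib

open Matrix Filter
open scoped Classical

/-- The spectral abscissa of a complex square matrix. -/
noncomputable def specAbsC {n : Type*} [Fintype n] [DecidableEq n]
    (A : Matrix n n ℂ) : ℝ :=
  sSup (Complex.re '' spectrum ℂ A)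

variable {N : ℕ}

/-- Access relation of the directed graph of nonzero off-diagonal entries. -/
def access (B : Matrix (Fin N) (Fin N) ℂ) : Fin N → Fin N → Prop :=
  Relation.ReflTransGen (fun i j => i ≠ j ∧ B i j ≠ 0)

/-- A class of `B` (strongly connected component of its directed graph). -/
def IsClass (B : Matrix (Fin N) (Fin N) ℂ) (γ : Set (Fin N)) : Prop :=
  ∃ m : Fin N, γ = {n' : Fin N | access B m n' ∧ access B n' m}

/-- Class `γ` has access to class `δ`. -/
def classAccess (B : Matrix (Fin N) (Fin N) ℂ) (γ δ : Set (Fin N)) : Prop :=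
  ∃ m ∈ γ, ∃ n' ∈ δ, access B m n'

/-- A chain of classes of `B`. -/
def IsClassChain (B : Matrix (Fin N) (Fin N) ℂ) (l : List (Set (Fin N))) : Prop :=
  (∀ γ ∈ l, IsClass B γ) ∧ l.Chain' (fun γ δ => classAccess B γ δ ∧ γ ≠ δ)

/-- The principal submatrix of `B` on the index set `γ`. -/
def subMat (B : Matrix (Fin N) (Fin N) ℂ) (γ : Set (Fin N)) : Matrix γ γ ℂ :=
  fun a b => B a.1 b.1

/-- A class `γ` of `B` is basic if `ζ(B_{γ,γ}) = ζ(B)`. -/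
def IsBasic (B : Matrix (Fin N) (Fin N) ℂ) (γ : Set (Fin N)) : Prop :=
  specAbsC (subMat B γ) = specAbsC B

/-- The length of a chain of classes: the number of basic classes it contains. -/
noncomputable def chainLen (B : Matrix (Fin N) (Fin N) ℂ) (l : List (Set (Fin N))) : ℕ :=
  l.countP (fun γ => decide (IsBasic B γ))

/-- The matrix-valued function `A(z) = [[z,1,1,0],[0,z,0,1],[0,0,−z,1],[0,0,0,z]]`. -/
noncomputable def Amat (z : ℂ) : Matrix (Fin 4) (Fin 4) ℂ :=
  !![z, 1, 1, 0; 0, z, 0, 1; 0, 0, -z, 1; 0, 0, 0, z]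


section Aux

/-- Explicit description of the access relation of `Amat 0`. -/
def Racc (i j : Fin 4) : Prop :=
  i = j ∨ (i = 0 ∧ j ≠ 0) ∨ (i = 1 ∧ j = 3) ∨ (i = 2 ∧ j = 3)

instance : DecidableRel Racc := fun i j =>
  decidable_of_iff (i = j ∨ (i = 0 ∧ j ≠ 0) ∨ (i = 1 ∧ j = 3) ∨ (i = 2 ∧ j = 3)) Iff.rfl

lemma edge_iff (i j : Fin 4) : (i ≠ j ∧ Amat 0 i j ≠ 0) ↔
    ((i, j) = (0, 1) ∨ (i, j) = (0, 2) ∨ (i, j) = (1, 3) ∨ (i, j) = (2, 3)) := by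
  fin_cases i <;> fin_cases j <;>
    simp [Amat, Matrix.vecHead, Matrix.vecTail, Prod.ext_iff]

lemma racc_step (i b c : Fin 4) (e : b ≠ c ∧ Amat 0 b c ≠ 0) (h : Racc i b) : Racc i c := by
  rw [edge_iff] at e
  revert h
  rcases e with e | e | e | e <;> (rw [Prod.ext_iff] at e; obtain ⟨rfl, rfl⟩ := e) <;>
    revert i <;> decide

lemma access_iff (i j : Fin 4) : access (Amat 0) i j ↔ Racc i j := by
  constructor
  · intro h
    induction h with
    | refl => left; rfl
    | tail _ h2 ih => exact racc_step _ _ _ h2 ih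
  · have e01 : access (Amat 0) 0 1 := Relation.ReflTransGen.single ((edge_iff 0 1).2 (by decide))
    have e02 : access (Amat 0) 0 2 := Relation.ReflTransGen.single ((edge_iff 0 2).2 (by decide))
    have e13 : access (Amat 0) 1 3 := Relation.ReflTransGen.single ((edge_iff 1 3).2 (by decide))
    have e23 : access (Amat 0) 2 3 := Relation.ReflTransGen.single ((edge_iff 2 3).2 (by decide))
    intro h
    rcases h with rfl | ⟨rfl, hj⟩ | ⟨rfl, rfl⟩ | ⟨rfl, rfl⟩
    · exact Relation.ReflTransGen.refl
    · fin_cases j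
      · exact absurd rfl hj
      · exact e01
      · exact e02
      · exact e01.tail ((edge_iff 1 3).2 (by decide))
    · exact e13
    · exact e23

lemma class_set_eq (m : Fin 4) :
    {n' : Fin 4 | access (Amat 0) m n' ∧ access (Amat 0) n' m} = {m} := by
  ext n
  rw [Set.mem_setOf_eq, Set.mem_singleton_iff, access_iff, access_iff]
  revert m n
  decide

lemma isClass_singleton (k : Fin 4) : IsClass (Amat 0) {k} :=
  ⟨k, (class_set_eq k).symm⟩

lemma class_eq_singleton {γ : Set (Fin 4)} (h : IsClass (Amat 0) γ) : ∃ m, γ = {m} := by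
  obtain ⟨m, rfl⟩ := h
  exact ⟨m, class_set_eq m⟩

lemma classAccess_singleton {a b : Fin 4} (h : classAccess (Amat 0) {a} {b}) : Racc a b := by
  obtain ⟨m, hm, n, hn, hacc⟩ := h
  rw [Set.mem_singleton_iff] at hm hn
  subst hm; subst hn
  exact (access_iff _ _).1 hacc

lemma classAccess_of_racc {a b : Fin 4} (h : Racc a b) : classAccess (Amat 0) {a} {b} :=
  ⟨a, rfl, b, rfl, (access_iff a b).2 h⟩

lemma spec_amat0 : spectrum ℂ (Amat 0) = {0} := by
  ext μ
  rw [spectrum.mem_iff, Set.mem_singleton_iff]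
  rw [Matrix.isUnit_iff_isUnit_det, isUnit_iff_ne_zero, not_not]
  rw [Algebra.algebraMap_eq_smul_one]
  have : (μ • (1 : Matrix (Fin 4) (Fin 4) ℂ) - Amat 0).det = μ ^ 4 := by
    rw [Matrix.det_of_upperTriangular]
    · simp [Amat, Matrix.smul_apply, Matrix.one_apply, Fin.prod_univ_four,
        Matrix.vecHead, Matrix.vecTail]
      ring
    · intro i j hij
      fin_cases i <;> fin_cases j <;>
        simp_all [Amat, Matrix.smul_apply, Matrix.one_apply, Matrix.vecHead, Matrix.vecTail]
  rw [this, pow_eq_zero_iff (by norm_num)]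

lemma specAbs_amat0 : specAbsC (Amat 0) = 0 := by
  rw [specAbsC, spec_amat0]
  simp

lemma submat_singleton (k : Fin 4) : subMat (Amat 0) {k} = 0 := by
  funext a b
  have ha : a.1 = k := a.2
  have hb : b.1 = k := b.2
  show Amat 0 a.1 b.1 = 0
  rw [ha, hb]
  fin_cases k <;> simp [Amat, Matrix.vecHead, Matrix.vecTail]

lemma specAbs_zero {n : Type*} {f : Fintype n} {d : DecidableEq n} (h : Nonempty n) :
    @specAbsC n f d 0 = 0 := by
  letI := f; letI := d; haveI := h
  unfold specAbsC
  rw [spectrum.zero_eq]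
  simp

lemma isBasic_singleton (k : Fin 4) : IsBasic (Amat 0) {k} := by
  haveI : Nonempty ({k} : Set (Fin 4)) := ⟨⟨k, rfl⟩⟩
  rw [IsBasic, specAbs_amat0, submat_singleton]
  exact specAbs_zero ⟨⟨k, rfl⟩⟩

lemma no_four_chain : ∀ a b c d : Fin 4,
    Racc a b → a ≠ b → Racc b c → b ≠ c → Racc c d → c ≠ d → False := by decide

end Aux


/-- For `A(z) = [[z,1,1,0],[0,z,0,1],[0,0,−z,1],[0,0,0,z]]`, one has
`A(z)⁻¹ = z⁻² [[z,−1,1,0],[0,z,0,−1],[0,0,−z,1],[0,0,0,z]]` for `z ≠ 0`, so `z = 0` is a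
pole of order exactly `2` of `A(z)⁻¹`, even though the length of the longest chain of
classes of `A(0)` is `3`. -/


theorem example_matrix_pole_order_two_but_chain_three :
    (∀ z : ℂ, z ≠ 0 →
      (Amat z)⁻¹ = (z ^ 2)⁻¹ •
        !![z, -1, 1, 0; 0, z, 0, -1; 0, 0, -z, 1; 0, 0, 0, z]) ∧
    (∃ L : Matrix (Fin 4) (Fin 4) ℂ, L ≠ 0 ∧
      Tendsto (fun z : ℂ => z ^ 2 • (Amat z)⁻¹) (nhdsWithin 0 {(0 : ℂ)}ᶜ) (nhds L)) ∧
    IsGreatest {L : ℕ | ∃ l : List (Set (Fin 4)),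
      IsClassChain (Amat 0) l ∧ chainLen (Amat 0) l = L} 3 := by
  refine ⟨?_, ?_, ?_⟩
  · intro z hz
    apply Matrix.inv_eq_right_inv
    ext i j
    fin_cases i <;> fin_cases j <;>
      simp [Amat, Matrix.mul_apply, Fin.sum_univ_four, Matrix.one_apply,
        Matrix.vecHead, Matrix.vecTail] <;>
      field_simp <;> ring
  · refine ⟨!![0, -1, 1, 0; 0, 0, 0, -1; 0, 0, 0, 1; 0, 0, 0, 0], ?_, ?_⟩
    · intro h
      have := congrFun (congrFun h 0) 1
      simp at this
    · have h1 : Tendsto (fun z : ℂ => !![z, -1, 1, 0; 0, z, 0, -1; 0, 0, -z, 1; 0, 0, 0, z])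
          (nhdsWithin 0 {(0 : ℂ)}ᶜ)
          (nhds !![0, -1, 1, 0; 0, 0, 0, -1; 0, 0, 0, 1; 0, 0, 0, 0]) := by
        apply tendsto_nhdsWithin_of_tendsto_nhds
        apply tendsto_pi_nhds.2
        intro i
        apply tendsto_pi_nhds.2
        intro j
        fin_cases i <;> fin_cases j <;>
          simp [Matrix.vecHead, Matrix.vecTail] <;>
          first
            | exact tendsto_const_nhds
            | exact tendsto_id
            | simpa using (tendsto_id : Tendsto (fun z : ℂ => z) (nhds 0) (nhds 0))
            | simpa using ((tendsto_id : Tendsto (fun z : ℂ => z) (nhds 0) (nhds 0)).neg)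
      refine h1.congr' ?_
      filter_upwards [self_mem_nhdsWithin] with z hz
      have hz' : z ≠ 0 := hz
      have h1 : (Amat z)⁻¹ = (z ^ 2)⁻¹ •
          !![z, -1, 1, 0; 0, z, 0, -1; 0, 0, -z, 1; 0, 0, 0, z] := by
        apply Matrix.inv_eq_right_inv
        ext i j
        fin_cases i <;> fin_cases j <;>
          simp [Amat, Matrix.mul_apply, Fin.sum_univ_four, Matrix.one_apply,
            Matrix.vecHead, Matrix.vecTail] <;>
          field_simp <;> ring
      rw [h1, smul_smul, mul_inv_cancel₀ (pow_ne_zero 2 hz'), one_smul]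
  · constructor
    · refine ⟨[{0}, {1}, {3}], ⟨?_, ?_⟩, ?_⟩
      · intro γ hγ
        simp only [List.mem_cons, List.not_mem_nil, or_false] at hγ
        rcases hγ with rfl | rfl | rfl <;> exact isClass_singleton _
      · refine List.IsChain.cons_cons ⟨classAccess_of_racc (by decide), ?_⟩
          (List.IsChain.cons_cons ⟨classAccess_of_racc (by decide), ?_⟩ (List.isChain_singleton _)) <;>
          · intro h
            rw [Set.singleton_eq_singleton_iff] at h
            exact absurd h (by decide)
      · simp [chainLen, List.countP_cons, decide_eq_true_eq,
          isBasic_singleton 0, isBasic_singleton 1, isBasic_singleton 3]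
    · rintro L ⟨l, ⟨hcl, hch⟩, rfl⟩
      have hlen : l.length ≤ 3 := by
        rcases l with _ | ⟨a, _ | ⟨b, _ | ⟨c, _ | ⟨d, t⟩⟩⟩⟩
        · simp
        · simp
        · simp
        · simp
        · exfalso
          obtain ⟨ma, rfl⟩ := class_eq_singleton (hcl a (by simp))
          obtain ⟨mb, rfl⟩ := class_eq_singleton (hcl b (by simp))
          obtain ⟨mc, rfl⟩ := class_eq_singleton (hcl c (by simp))
          obtain ⟨md, rfl⟩ := class_eq_singleton (hcl d (by simp))
          rw [List.Chain', List.isChain_cons_cons] at hch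
          obtain ⟨⟨hab, hab'⟩, hch⟩ := hch
          rw [List.isChain_cons_cons] at hch
          obtain ⟨⟨hbc, hbc'⟩, hch⟩ := hch
          rw [List.isChain_cons_cons] at hch
          obtain ⟨⟨hcd, hcd'⟩, _⟩ := hch
          refine no_four_chain ma mb mc md (classAccess_singleton hab) ?_
            (classAccess_singleton hbc) ?_ (classAccess_singleton hcd) ?_ <;>
            · intro h; subst h; simp at *
      calc chainLen (Amat 0) l ≤ l.length := List.countP_le_length
        _ ≤ 3 := hlen
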